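/- Local GD with constant stepsize 0 < γ ≤ 1/(4LH) satisfies f(x̄_T) − f(x_*) ≤ 2‖x_0 − x_*‖²/(γT) + 24γ²σ²H²L, where x̄_T = (1/T) Σ_{t=0}^{T−1} x̂_t and T is a synchronization time. -/

import Mathlib

open Finset RealInnerProductSpace

noncomputable def avgV {d M : ℕ} (x : Fin M → EuclideanSpace ℝ (Fin d)) :
    EuclideanSpace ℝ (Fin d) := (1 / (M : ℝ)) • ∑ m, x m

noncomputable def avgR {M : ℕ} (a : Fin M → ℝ) : ℝ := (1 / (M : ℝ)) * ∑ m, a m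

namespace LGD

variable {d M : ℕ}

lemma avgR_nonneg {a : Fin M → ℝ} (h : ∀ m, 0 ≤ a m) : 0 ≤ avgR a := by
  unfold avgR
  have h1 : (0:ℝ) ≤ ∑ m, a m := Finset.sum_nonneg fun m _ => h m
  have h2 : (0:ℝ) ≤ 1 / (M:ℝ) := by positivity
  exact mul_nonneg h2 h1

lemma avgR_mono {a b : Fin M → ℝ} (h : ∀ m, a m ≤ b m) : avgR a ≤ avgR b := by
  unfold avgR
  have : (∑ m, a m) ≤ ∑ m, b m := Finset.sum_le_sum fun m _ => h m
  have h0 : (0:ℝ) ≤ 1 / (M:ℝ) := by positivity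
  nlinarith

lemma avgR_add (a b : Fin M → ℝ) : avgR (fun m => a m + b m) = avgR a + avgR b := by
  unfold avgR; rw [Finset.sum_add_distrib]; ring

lemma avgR_sub (a b : Fin M → ℝ) : avgR (fun m => a m - b m) = avgR a - avgR b := by
  unfold avgR; rw [Finset.sum_sub_distrib]; ring

lemma avgR_mul (c : ℝ) (a : Fin M → ℝ) : avgR (fun m => c * a m) = c * avgR a := by
  unfold avgR; rw [← Finset.mul_sum]; ring

lemma avgR_const (hM : 0 < M) (c : ℝ) : avgR (fun _ : Fin M => c) = c := by
  unfold avgR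
  rw [Finset.sum_const, Finset.card_univ, Fintype.card_fin]
  have : (M:ℝ) ≠ 0 := Nat.cast_ne_zero.2 hM.ne'
  field_simp
  exact nsmul_eq_mul _ _

lemma avgR_sum (s : Finset ℕ) (a : Fin M → ℕ → ℝ) :
    avgR (fun m => ∑ t ∈ s, a m t) = ∑ t ∈ s, avgR (fun m => a m t) := by
  unfold avgR
  rw [Finset.sum_comm, Finset.mul_sum]

lemma inner_avgV (v : Fin M → EuclideanSpace ℝ (Fin d)) (w : EuclideanSpace ℝ (Fin d)) :
    ⟪avgV v, w⟫ = avgR (fun m => ⟪v m, w⟫) := by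
  unfold avgV avgR
  rw [real_inner_smul_left, sum_inner]

lemma avgV_add (u v : Fin M → EuclideanSpace ℝ (Fin d)) :
    avgV (fun m => u m + v m) = avgV u + avgV v := by
  unfold avgV; rw [Finset.sum_add_distrib, smul_add]

lemma avgV_sub (u v : Fin M → EuclideanSpace ℝ (Fin d)) :
    avgV (fun m => u m - v m) = avgV u - avgV v := by
  unfold avgV; rw [Finset.sum_sub_distrib, smul_sub]

lemma avgV_smul (c : ℝ) (v : Fin M → EuclideanSpace ℝ (Fin d)) :
    avgV (fun m => c • v m) = c • avgV v := by
  unfold avgV; rw [← Finset.smul_sum, smul_comm]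

lemma avgV_const (hM : 0 < M) (c : EuclideanSpace ℝ (Fin d)) :
    avgV (fun _ : Fin M => c) = c := by
  unfold avgV
  rw [Finset.sum_const, Finset.card_univ, Fintype.card_fin]
  have h : (M:ℝ) ≠ 0 := Nat.cast_ne_zero.2 hM.ne'
  rw [← Nat.cast_smul_eq_nsmul ℝ, smul_smul]
  field_simp
  exact one_smul _ _

lemma sum_eq_smul_avgV (hM : 0 < M) (v : Fin M → EuclideanSpace ℝ (Fin d)) :
    ∑ m, v m = (M:ℝ) • avgV v := by
  unfold avgV
  have h : (M:ℝ) ≠ 0 := Nat.cast_ne_zero.2 hM.ne'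
  rw [smul_smul]
  field_simp
  exact (one_smul _ _).symm

lemma avg_var_id (hM : 0 < M) (v : Fin M → EuclideanSpace ℝ (Fin d)) :
    avgR (fun m => ‖v m - avgV v‖^2) + ‖avgV v‖^2 = avgR (fun m => ‖v m‖^2) := by
  have hexp : ∀ m, ‖v m - avgV v‖^2 = ‖v m‖^2 - 2 * ⟪v m, avgV v⟫ + ‖avgV v‖^2 := by
    intro m
    rw [norm_sub_sq_real]
  have h1 : avgR (fun m => ‖v m - avgV v‖^2)
      = avgR (fun m => ‖v m‖^2) - 2 * avgR (fun m => ⟪v m, avgV v⟫) + ‖avgV v‖^2 := by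
    simp only [hexp]
    rw [show (fun m => ‖v m‖^2 - 2 * ⟪v m, avgV v⟫ + ‖avgV v‖^2)
        = (fun m => (‖v m‖^2 - 2 * ⟪v m, avgV v⟫) + ‖avgV v‖^2) from rfl,
      avgR_add, avgR_sub, avgR_mul, avgR_const hM]
  have h2 : avgR (fun m => ⟪v m, avgV v⟫) = ‖avgV v‖^2 := by
    rw [← inner_avgV, real_inner_self_eq_norm_sq]
  rw [h1, h2]; ring

lemma norm_avgV_sq_le (hM : 0 < M) (v : Fin M → EuclideanSpace ℝ (Fin d)) :
    ‖avgV v‖^2 ≤ avgR (fun m => ‖v m‖^2) := by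
  have := avg_var_id hM v
  have h0 : 0 ≤ avgR (fun m => ‖v m - avgV v‖^2) := avgR_nonneg (fun m => by positivity)
  linarith

lemma avg_var_le (hM : 0 < M) (v : Fin M → EuclideanSpace ℝ (Fin d)) :
    avgR (fun m => ‖v m - avgV v‖^2) ≤ avgR (fun m => ‖v m‖^2) := by
  have := avg_var_id hM v
  have h0 : (0:ℝ) ≤ ‖avgV v‖^2 := by positivity
  linarith

/-- Cocoercivity from the two-sided Bregman bounds. -/
lemma coco {L : ℝ} (hL : 0 < L) (f : EuclideanSpace ℝ (Fin d) → ℝ)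
    (g : EuclideanSpace ℝ (Fin d) → EuclideanSpace ℝ (Fin d))
    (h : ∀ x y, 0 ≤ f x - f y - ⟪g y, x - y⟫ ∧
      f x - f y - ⟪g y, x - y⟫ ≤ L / 2 * ‖x - y‖ ^ 2)
    (x y : EuclideanSpace ℝ (Fin d)) :
    ‖g x - g y‖^2 ≤ 2*L*(f x - f y - ⟪g y, x - y⟫) := by
  set Δ := g x - g y with hΔ
  set z := x - L⁻¹ • Δ with hz
  have h1 := (h z y).1
  have h2 := (h z x).2
  have ezx : z - x = -(L⁻¹ • Δ) := by rw [hz]; abel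
  have ezy : z - y = (x - y) - L⁻¹ • Δ := by rw [hz]; abel
  have e1 : ⟪g y, z - y⟫ = ⟪g y, x - y⟫ - L⁻¹ * ⟪g y, Δ⟫ := by
    rw [ezy, inner_sub_right, real_inner_smul_right]
  have e2 : ⟪g x, z - x⟫ = -(L⁻¹ * ⟪g x, Δ⟫) := by
    rw [ezx, inner_neg_right, real_inner_smul_right]
  have e3 : ‖z - x‖^2 = L⁻¹^2 * ‖Δ‖^2 := by
    rw [ezx, norm_neg, norm_smul]
    simp [mul_pow, abs_of_nonneg (inv_nonneg.2 hL.le)]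
  have e4 : ⟪g x, Δ⟫ - ⟪g y, Δ⟫ = ‖Δ‖^2 := by
    rw [← inner_sub_left, ← hΔ, real_inner_self_eq_norm_sq]
  rw [e1] at h1
  rw [e2, e3] at h2
  have hLne : L ≠ 0 := hL.ne'
  have key : L⁻¹ * ⟪g x, Δ⟫ - L⁻¹ * ⟪g y, Δ⟫ = L⁻¹ * ‖Δ‖^2 := by
    rw [← mul_sub, e4]
  have e5 : L/2 * (L⁻¹^2 * ‖Δ‖^2) = L⁻¹ * ‖Δ‖^2 / 2 := by
    field_simp
  have hD : L⁻¹ * ‖Δ‖^2 / 2 ≤ f x - f y - ⟪g y, x - y⟫ := by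
    rw [e5] at h2
    linarith
  have h6 := mul_le_mul_of_nonneg_left hD hL.le
  have e7 : L * (L⁻¹ * ‖Δ‖^2 / 2) = ‖Δ‖^2 / 2 := by
    field_simp
  rw [e7] at h6
  linarith

lemma norm_sq_le_two (u v : EuclideanSpace ℝ (Fin d)) :
    ‖u‖^2 ≤ 2*‖u - v‖^2 + 2*‖v‖^2 := by
  have h := norm_add_le (u - v) v
  rw [sub_add_cancel] at h
  nlinarith [norm_nonneg (u - v), norm_nonneg v, sq_nonneg (‖u - v‖ - ‖v‖), mul_self_le_mul_self (norm_nonneg u) h]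

lemma inner_le_mixed {L : ℝ} (hL : 0 < L) (a b : EuclideanSpace ℝ (Fin d)) :
    ⟪a, b⟫ ≤ 1/(2*L)*‖a‖^2 + L/2*‖b‖^2 := by
  have h1 := real_inner_le_norm a b
  have h2L : (0:ℝ) < 2*L := by linarith
  rw [show 1/(2*L)*‖a‖^2 + L/2*‖b‖^2 = (‖a‖^2 + L^2*‖b‖^2)/(2*L) from by
    field_simp, ge_iff_le.symm, ge_iff_le, le_div_iff₀ h2L]
  nlinarith [sq_nonneg (‖a‖ - L*‖b‖)]

end LGD

open LGD in
set_option maxHeartbeats 4000000 in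
/-- Theorem 1: Local GD with sync times `S` (gaps at most `H`)
and constant stepsize `0 < γ ≤ 1/(4LH)` satisfies, for any synchronization
time `T = S p > 0`:
`f(x̄_T) − f(x⋆) ≤ 2‖x₀ − x⋆‖²/(γT) + 24γ²σ²H²L`,
where `x̄_T = (1/T) ∑_{t=0}^{T−1} x̂_t` and `σ² = (1/M) ∑_m ‖∇f_m(x⋆)‖²`. -/
theorem local_gd_convergence {d M : ℕ} (hM : 0 < M) (L γ : ℝ) (hL : 0 < L)
    (f : Fin M → EuclideanSpace ℝ (Fin d) → ℝ)
    (g : Fin M → EuclideanSpace ℝ (Fin d) → EuclideanSpace ℝ (Fin d))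
    (hsc : ∀ m x y, 0 ≤ f m x - f m y - ⟪g m y, x - y⟫ ∧
      f m x - f m y - ⟪g m y, x - y⟫ ≤ L / 2 * ‖x - y‖ ^ 2)
    (xstar : EuclideanSpace ℝ (Fin d))
    (hmin : ∀ y, avgR (fun m => f m xstar) ≤ avgR (fun m => f m y))
    (S : ℕ → ℕ) (H : ℕ) (hH1 : 1 ≤ H) (hS0 : S 0 = 0) (hSmono : StrictMono S)
    (hgap : ∀ q, S (q + 1) - S q ≤ H)
    (hγ0 : 0 < γ) (hγ : γ ≤ 1 / (4 * L * H))
    (x₀ : EuclideanSpace ℝ (Fin d))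
    (x : ℕ → Fin M → EuclideanSpace ℝ (Fin d))
    (hx0 : ∀ m, x 0 m = x₀)
    (hstep : ∀ t m, (∀ q, S q ≠ t + 1) →
      x (t + 1) m = x t m - γ • g m (x t m))
    (hsync : ∀ t m, (∃ q, S q = t + 1) →
      x (t + 1) m = avgV (fun j => x t j - γ • g j (x t j)))
    (T p : ℕ) (hT : T = S p) (hTpos : 0 < T) :
    avgR (fun m => f m ((1 / (T : ℝ)) • ∑ t ∈ Finset.range T, avgV (x t)))
      - avgR (fun m => f m xstar) ≤
      2 * ‖x₀ - xstar‖ ^ 2 / (γ * T)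
      + 24 * γ ^ 2 * avgR (fun m => ‖g m xstar‖ ^ 2) * H ^ 2 * L := by
  set xh : ℕ → EuclideanSpace ℝ (Fin d) := fun t => avgV (x t) with hxh
  set gb : ℕ → EuclideanSpace ℝ (Fin d) := fun t => avgV (fun m => g m (x t m)) with hgb
  set F : EuclideanSpace ℝ (Fin d) → ℝ := fun y => avgR (fun m => f m y) with hF
  set Fp : ℕ → ℝ := fun t => F (xh t) - F xstar with hFp
  set V : ℕ → ℝ := fun t => avgR (fun m => ‖x t m - xh t‖ ^ 2) with hV
  set Q : ℕ → ℝ := fun t => avgR (fun m => ‖g m (x t m) - g m xstar‖ ^ 2) with hQdef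
  set W : ℕ → ℝ := fun t => avgR (fun m => ‖g m (x t m) - gb t‖ ^ 2) with hWdef
  set sig : ℝ := avgR (fun m => ‖g m xstar‖ ^ 2) with hsig
  set r : ℕ → ℝ := fun t => ‖xh t - xstar‖ ^ 2 with hr
  set Db : ℕ → ℝ := fun t =>
    avgR (fun m => f m (x t m) - f m xstar - ⟪g m xstar, x t m - xstar⟫) with hDb
  -- numeric facts
  have hMR : (0:ℝ) < M := Nat.cast_pos.2 hM
  have hHR : (0:ℝ) < H := by exact_mod_cast Nat.lt_of_lt_of_le Nat.zero_lt_one hH1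
  have hHR1 : (1:ℝ) ≤ H := by exact_mod_cast hH1
  have hγLH : γ * L * (H:ℝ) ≤ 1/4 := by
    rw [le_div_iff₀ (by positivity : (0:ℝ) < 4 * L * H)] at hγ
    nlinarith
  have hγL : γ * L ≤ 1/4 := by nlinarith [mul_pos hγ0 hL]
  have hγinvL : γ ≤ L⁻¹ := by
    rw [← one_div]
    rw [le_div_iff₀ hL]
    nlinarith
  -- average identity
  have havg_id : ∀ y z : EuclideanSpace ℝ (Fin d),
      F y - F z - ⟪avgV (fun m => g m z), y - z⟫
        = avgR (fun m => f m y - f m z - ⟪g m z, y - z⟫) := by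
    intro y z
    rw [inner_avgV]
    simp only [hF]
    rw [← avgR_sub, ← avgR_sub]
  have hFlow : ∀ y z : EuclideanSpace ℝ (Fin d),
      0 ≤ F y - F z - ⟪avgV (fun m => g m z), y - z⟫ := by
    intro y z
    rw [havg_id]
    exact avgR_nonneg fun m => (hsc m y z).1
  have hFup : ∀ y z : EuclideanSpace ℝ (Fin d),
      F y - F z - ⟪avgV (fun m => g m z), y - z⟫ ≤ L/2 * ‖y - z‖^2 := by
    intro y z
    rw [havg_id]
    exact le_trans (avgR_mono fun m => (hsc m y z).2) (le_of_eq (avgR_const hM _))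
  have hminF : ∀ y, F xstar ≤ F y := by
    intro y
    simp only [hF]
    exact hmin y
  -- gradient at optimum averages to zero
  have hgstar : avgV (fun m => g m xstar) = 0 := by
    set s0 : EuclideanSpace ℝ (Fin d) := avgV (fun m => g m xstar) with hs0
    set y : EuclideanSpace ℝ (Fin d) := xstar - L⁻¹ • s0 with hy
    have h1 : F xstar ≤ F y := hminF y
    have h2 := hFup y xstar
    rw [← hs0] at h2
    have e0 : y - xstar = -(L⁻¹ • s0) := by rw [hy]; abel
    have e1 : ⟪s0, y - xstar⟫ = -(L⁻¹ * ‖s0‖^2) := by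
      rw [e0, inner_neg_right, real_inner_smul_right, real_inner_self_eq_norm_sq]
    have e2 : ‖y - xstar‖^2 = L⁻¹^2 * ‖s0‖^2 := by
      rw [e0, norm_neg, norm_smul, mul_pow]
      simp [abs_of_nonneg (inv_nonneg.2 hL.le)]
    rw [e1, e2] at h2
    have e5 : L/2 * (L⁻¹^2 * ‖s0‖^2) = L⁻¹ * ‖s0‖^2 / 2 := by
      field_simp
    rw [e5] at h2
    have h5 : L⁻¹ * ‖s0‖^2 ≤ 0 := by linarith
    have h6 : ‖s0‖^2 ≤ 0 := by
      have h6' := mul_le_mul_of_nonneg_left h5 hL.le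
      rw [mul_zero, ← mul_assoc, mul_inv_cancel₀ hL.ne', one_mul] at h6'
      exact h6'
    have h7 : ‖s0‖^2 = 0 := le_antisymm h6 (sq_nonneg _)
    exact norm_eq_zero.1 (pow_eq_zero_iff two_ne_zero |>.1 h7)
  -- averaged recursion
  have hrec : ∀ t, xh (t+1) = xh t - γ • gb t := by
    intro t
    have hav : avgV (x (t+1)) = avgV (fun m => x t m - γ • g m (x t m)) := by
      by_cases hq : ∃ q, S q = t+1
      · have hc : x (t+1) = fun _ => avgV (fun j => x t j - γ • g j (x t j)) :=
          funext fun m => hsync t m hq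
        rw [hc, avgV_const hM]
      · push_neg at hq
        exact congrArg avgV (funext fun m => hstep t m hq)
    show avgV (x (t+1)) = avgV (x t) - γ • gb t
    rw [hav, avgV_sub, avgV_smul, hgb]
  -- at sync times all machines agree with the average
  have hsyncpt : ∀ q m, x (S q) m = xh (S q) := by
    intro q m
    cases q with
    | zero =>
      rw [hS0, hx0 m]
      have hc : x 0 = fun _ => x₀ := funext hx0
      show x₀ = avgV (x 0)
      rw [hc, avgV_const hM]
    | succ q' =>
      have hpos : 0 < S (q'+1) := by
        have h := hSmono (Nat.succ_pos q')
        rw [hS0] at h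
        exact h
      obtain ⟨t, ht⟩ : ∃ t, S (q'+1) = t + 1 := ⟨S (q'+1) - 1, by omega⟩
      have hcm := hsync t m ⟨q'+1, ht⟩
      have hall : x (t+1) = fun _ => avgV (fun j => x t j - γ • g j (x t j)) :=
        funext fun j => hsync t j ⟨q'+1, ht⟩
      have hx' : xh (t+1) = avgV (fun j => x t j - γ • g j (x t j)) := by
        show avgV (x (t+1)) = _
        rw [hall, avgV_const hM]
      rw [ht, hcm, hx']
  -- unrolled deviation within an epoch
  have hunroll : ∀ q t, S q ≤ t → t < S (q+1) → ∀ m,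
      x t m - xh t = (-γ) • ∑ s ∈ Finset.Ico (S q) t, (g m (x s m) - gb s) := by
    intro q t hst
    induction t, hst using Nat.le_induction with
    | base =>
      intro _ m
      rw [Finset.Ico_self, Finset.sum_empty, smul_zero, hsyncpt q m, sub_self]
    | succ t hst IH =>
      intro hlt m
      have hlt' : t < S (q+1) := Nat.lt_of_succ_lt hlt
      have hIH := IH hlt' m
      have hnot : ∀ q', S q' ≠ t + 1 := by
        intro q' hq'
        have h1 : S q < S q' := by omega
        have h2 : S q' < S (q+1) := by omega
        have hq1 : q < q' := hSmono.lt_iff_lt.1 h1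
        have hq2 : q' < q+1 := hSmono.lt_iff_lt.1 h2
        omega
      have hx' := hstep t m hnot
      rw [Finset.sum_Ico_succ_top hst, smul_add, ← hIH, hx', hrec t, neg_smul, smul_sub]
      abel
  -- deviation bound within an epoch
  have hVbound : ∀ q t, S q ≤ t → t < S (q+1) →
      V t ≤ γ^2 * H * ∑ s ∈ Finset.Ico (S q) t, W s := by
    intro q t hst hlt
    have hcard : ((Finset.Ico (S q) t).card : ℝ) ≤ H := by
      rw [Nat.card_Ico]
      have : t - S q ≤ H := by have := hgap q; omega
      exact_mod_cast this
    have hper : ∀ m, ‖x t m - xh t‖^2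
        ≤ γ^2 * H * ∑ s ∈ Finset.Ico (S q) t, ‖g m (x s m) - gb s‖^2 := by
      intro m
      rw [hunroll q t hst hlt m, norm_smul]
      have hns : ‖(-γ : ℝ)‖ = γ := by
        rw [norm_neg, Real.norm_eq_abs, abs_of_pos hγ0]
      rw [hns, mul_pow]
      have hsum0 : (0:ℝ) ≤ ∑ s ∈ Finset.Ico (S q) t, ‖g m (x s m) - gb s‖^2 :=
        Finset.sum_nonneg fun s _ => by positivity
      have h1 : ‖∑ s ∈ Finset.Ico (S q) t, (g m (x s m) - gb s)‖
          ≤ ∑ s ∈ Finset.Ico (S q) t, ‖g m (x s m) - gb s‖ := norm_sum_le _ _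
      have h2 : (∑ s ∈ Finset.Ico (S q) t, ‖g m (x s m) - gb s‖)^2
          ≤ ((Finset.Ico (S q) t).card : ℝ) * ∑ s ∈ Finset.Ico (S q) t, ‖g m (x s m) - gb s‖^2 :=
        sq_sum_le_card_mul_sum_sq
      have h3 : ‖∑ s ∈ Finset.Ico (S q) t, (g m (x s m) - gb s)‖^2
          ≤ (H:ℝ) * ∑ s ∈ Finset.Ico (S q) t, ‖g m (x s m) - gb s‖^2 := by
        have h4 := pow_le_pow_left₀ (norm_nonneg _) h1 2
        have h5 := mul_le_mul_of_nonneg_right hcard hsum0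
        linarith
      calc γ^2 * ‖∑ s ∈ Finset.Ico (S q) t, (g m (x s m) - gb s)‖^2
          ≤ γ^2 * ((H:ℝ) * ∑ s ∈ Finset.Ico (S q) t, ‖g m (x s m) - gb s‖^2) :=
            mul_le_mul_of_nonneg_left h3 (sq_nonneg γ)
        _ = γ^2 * H * ∑ s ∈ Finset.Ico (S q) t, ‖g m (x s m) - gb s‖^2 := by ring
    calc V t ≤ avgR (fun m => γ^2 * H * ∑ s ∈ Finset.Ico (S q) t, ‖g m (x s m) - gb s‖^2) :=
          avgR_mono hper
      _ = γ^2 * H * avgR (fun m => ∑ s ∈ Finset.Ico (S q) t, ‖g m (x s m) - gb s‖^2) :=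
          avgR_mul _ _
      _ = γ^2 * H * ∑ s ∈ Finset.Ico (S q) t, W s := by
          rw [avgR_sum]
  have hW0 : ∀ s, 0 ≤ W s := fun s => avgR_nonneg fun m => by positivity
  have hV0 : ∀ s, 0 ≤ V s := fun s => avgR_nonneg fun m => by positivity
  have hQ0 : ∀ s, 0 ≤ Q s := fun s => avgR_nonneg fun m => by positivity
  have hFp0 : ∀ s, 0 ≤ Fp s := fun s => sub_nonneg.2 (hminF (xh s))
  have hsig0 : 0 ≤ sig := avgR_nonneg fun m => by positivity
  -- per-epoch and total deviation sums
  have hepoch : ∀ q, ∑ t ∈ Finset.Ico (S q) (S (q+1)), V t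
      ≤ γ^2 * H^2 * ∑ s ∈ Finset.Ico (S q) (S (q+1)), W s := by
    intro q
    have hWs0 : (0:ℝ) ≤ ∑ s ∈ Finset.Ico (S q) (S (q+1)), W s :=
      Finset.sum_nonneg fun s _ => hW0 s
    have hterm : ∀ t ∈ Finset.Ico (S q) (S (q+1)),
        V t ≤ γ^2 * H * ∑ s ∈ Finset.Ico (S q) (S (q+1)), W s := by
      intro t ht
      rw [Finset.mem_Ico] at ht
      refine le_trans (hVbound q t ht.1 ht.2) ?_
      apply mul_le_mul_of_nonneg_left _ (by positivity)
      apply Finset.sum_le_sum_of_subset_of_nonneg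
      · exact Finset.Ico_subset_Ico le_rfl ht.2.le
      · intro s _ _
        exact hW0 s
    calc ∑ t ∈ Finset.Ico (S q) (S (q+1)), V t
        ≤ ∑ _t ∈ Finset.Ico (S q) (S (q+1)),
            (γ^2 * H * ∑ s ∈ Finset.Ico (S q) (S (q+1)), W s) := Finset.sum_le_sum hterm
      _ = ((S (q+1) - S q : ℕ) : ℝ) * (γ^2 * H * ∑ s ∈ Finset.Ico (S q) (S (q+1)), W s) := by
          rw [Finset.sum_const, Nat.card_Ico, nsmul_eq_mul]
      _ ≤ (H:ℝ) * (γ^2 * H * ∑ s ∈ Finset.Ico (S q) (S (q+1)), W s) := by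
          refine mul_le_mul_of_nonneg_right ?_ (mul_nonneg (by positivity) hWs0)
          exact_mod_cast hgap q
      _ = γ^2 * H^2 * ∑ s ∈ Finset.Ico (S q) (S (q+1)), W s := by ring
  have htot : ∀ q, ∑ t ∈ Finset.range (S q), V t
      ≤ γ^2 * H^2 * ∑ s ∈ Finset.range (S q), W s := by
    intro q
    induction q with
    | zero => simp [hS0]
    | succ q IH =>
      have hmono : S q ≤ S (q+1) := (hSmono (Nat.lt_succ_self q)).le
      rw [Finset.range_eq_Ico] at IH ⊢
      rw [← Finset.sum_Ico_consecutive _ (Nat.zero_le (S q)) hmono,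
        ← Finset.sum_Ico_consecutive _ (Nat.zero_le (S q)) hmono, mul_add]
      exact add_le_add IH (hepoch q)
  -- pointwise bounds
  have hWb : ∀ s, W s ≤ 2 * Q s + 2 * sig := by
    intro s
    have h1 : W s ≤ avgR (fun m => ‖g m (x s m)‖^2) := by
      rw [hWdef]
      simp only [hgb]
      exact avg_var_le hM _
    have h2 : avgR (fun m => ‖g m (x s m)‖^2)
        ≤ avgR (fun m => 2*‖g m (x s m) - g m xstar‖^2 + 2*‖g m xstar‖^2) :=
      avgR_mono fun m => norm_sq_le_two _ _
    have h3 : avgR (fun m => 2*‖g m (x s m) - g m xstar‖^2 + 2*‖g m xstar‖^2)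
        = 2 * Q s + 2 * sig := by
      rw [avgR_add, avgR_mul, avgR_mul]
    linarith
  have hQb : ∀ s, Q s ≤ 2 * L * Db s := by
    intro s
    refine le_trans (avgR_mono fun m => coco hL (f m) (g m) (hsc m) (x s m) xstar) ?_
    rw [avgR_mul]
  have hDbb : ∀ s, Db s ≤ 2 * Fp s + L * V s := by
    intro s
    have hm : ∀ m, f m (x s m) - f m xstar - ⟪g m xstar, x s m - xstar⟫
        ≤ 2*(f m (xh s) - f m xstar - ⟪g m xstar, xh s - xstar⟫) + L * ‖x s m - xh s‖^2 := by
      intro m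
      have hup := (hsc m (x s m) (xh s)).2
      have hcoco := coco hL (f m) (g m) (hsc m) (xh s) xstar
      have hip := inner_le_mixed hL (g m (xh s) - g m xstar) (x s m - xh s)
      have hid : ⟪g m xstar, x s m - xstar⟫
          = ⟪g m xstar, xh s - xstar⟫ + ⟪g m xstar, x s m - xh s⟫ := by
        rw [← inner_add_right]
        congr 1
        abel
      have hid2 : ⟪g m (xh s), x s m - xh s⟫
          = ⟪g m (xh s) - g m xstar, x s m - xh s⟫ + ⟪g m xstar, x s m - xh s⟫ := by
        rw [inner_sub_left]
        ring
      have hcan : 1/(2*L)*‖g m (xh s) - g m xstar‖^2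
          ≤ f m (xh s) - f m xstar - ⟪g m xstar, xh s - xstar⟫ := by
        calc 1/(2*L)*‖g m (xh s) - g m xstar‖^2
            ≤ 1/(2*L)*(2*L*(f m (xh s) - f m xstar - ⟪g m xstar, xh s - xstar⟫)) :=
              mul_le_mul_of_nonneg_left hcoco (by positivity)
          _ = f m (xh s) - f m xstar - ⟪g m xstar, xh s - xstar⟫ := by
              field_simp
      linarith
    calc Db s ≤ avgR (fun m =>
          2*(f m (xh s) - f m xstar - ⟪g m xstar, xh s - xstar⟫) + L * ‖x s m - xh s‖^2) :=
        avgR_mono hm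
      _ = 2 * avgR (fun m => f m (xh s) - f m xstar - ⟪g m xstar, xh s - xstar⟫) + L * V s := by
          rw [avgR_add, avgR_mul, avgR_mul]
      _ = 2 * Fp s + L * V s := by
          rw [← havg_id (xh s) xstar, hgstar, inner_zero_left, sub_zero]
  -- descent
  have hdescent : ∀ t, r (t+1) ≤ r t - 2*γ*Fp t + γ*L*V t := by
    intro t
    have hstep1 : xh (t+1) - xstar = (xh t - xstar) - γ • gb t := by
      rw [hrec t]
      abel
    have hexp : r (t+1) = r t - 2*(γ*⟪xh t - xstar, gb t⟫) + γ^2*‖gb t‖^2 := by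
      simp only [hr]
      rw [hstep1, norm_sub_sq_real, real_inner_smul_right, norm_smul,
        Real.norm_eq_abs, mul_pow, sq_abs]
    have hgbQ : ‖gb t‖^2 ≤ Q t := by
      have he : gb t = avgV (fun m => g m (x t m) - g m xstar) := by
        rw [avgV_sub, hgstar, sub_zero, hgb]
      rw [he]
      exact norm_avgV_sq_le hM _
    have hinner : Fp t - L/2 * V t + 1/(2*L) * Q t ≤ ⟪xh t - xstar, gb t⟫ := by
      have hm : ∀ m, f m (xh t) - f m xstar - L/2*‖x t m - xh t‖^2
          + 1/(2*L)*‖g m (x t m) - g m xstar‖^2 ≤ ⟪g m (x t m), xh t - xstar⟫ := by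
        intro m
        have h1 := (hsc m (xh t) (x t m)).2
        have h2 : ⟪g m (x t m), x t m - xstar⟫ = -⟪g m (x t m), xstar - x t m⟫ := by
          rw [← inner_neg_right]
          congr 1
          abel
        have h3 := coco hL (f m) (g m) (hsc m) xstar (x t m)
        have h4 : 1/(2*L)*‖g m (x t m) - g m xstar‖^2
            ≤ f m xstar - f m (x t m) - ⟪g m (x t m), xstar - x t m⟫ := by
          have hrev : ‖g m (x t m) - g m xstar‖ = ‖g m xstar - g m (x t m)‖ :=
            norm_sub_rev _ _
          rw [hrev]
          calc 1/(2*L)*‖g m xstar - g m (x t m)‖^2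
              ≤ 1/(2*L)*(2*L*(f m xstar - f m (x t m) - ⟪g m (x t m), xstar - x t m⟫)) :=
                mul_le_mul_of_nonneg_left h3 (by positivity)
            _ = _ := by field_simp
        have h5 : ⟪g m (x t m), xh t - xstar⟫
            = ⟪g m (x t m), xh t - x t m⟫ + ⟪g m (x t m), x t m - xstar⟫ := by
          rw [← inner_add_right]
          congr 1
          abel
        have h6 : ‖xh t - x t m‖^2 = ‖x t m - xh t‖^2 := by
          rw [norm_sub_rev]
        rw [h6] at h1
        linarith
      have havg := avgR_mono hm
      have hlhs : avgR (fun m => f m (xh t) - f m xstar - L/2*‖x t m - xh t‖^2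
          + 1/(2*L)*‖g m (x t m) - g m xstar‖^2)
          = F (xh t) - F xstar - L/2 * V t + 1/(2*L) * Q t := by
        rw [avgR_add, avgR_sub, avgR_sub, avgR_mul, avgR_mul]
      have hrhs : avgR (fun m => ⟪g m (x t m), xh t - xstar⟫) = ⟪xh t - xstar, gb t⟫ := by
        rw [← inner_avgV]
        simp only [hgb]
        exact real_inner_comm _ _
      rw [hlhs, hrhs] at havg
      exact havg
    have hγ2 : γ^2 ≤ γ * L⁻¹ := by nlinarith [hγinvL, hγ0]
    have hmul := mul_le_mul_of_nonneg_left hinner (by linarith : (0:ℝ) ≤ 2*γ)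
    have hgb2 := mul_le_mul_of_nonneg_left hgbQ (sq_nonneg γ)
    have hcanc : 2*γ*(1/(2*L)) = γ * L⁻¹ := by
      field_simp
    calc r (t+1) = r t - 2*(γ*⟪xh t - xstar, gb t⟫) + γ^2*‖gb t‖^2 := hexp
      _ ≤ r t - 2*γ*(Fp t - L/2*V t + 1/(2*L)*Q t) + γ^2*Q t := by nlinarith [hmul, hgb2]
      _ = r t - 2*γ*Fp t + γ*L*V t + (γ^2 - γ*L⁻¹)*Q t := by
          field_simp
          ring
      _ ≤ r t - 2*γ*Fp t + γ*L*V t := by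
          have hnp := mul_nonpos_of_nonpos_of_nonneg (by linarith : γ^2 - γ*L⁻¹ ≤ 0) (hQ0 t)
          linarith
  have htel : ∀ n, r n + ∑ t ∈ Finset.range n, (2*γ*Fp t)
      ≤ r 0 + ∑ t ∈ Finset.range n, (γ*L*V t) := by
    intro n
    induction n with
    | zero => simp
    | succ n IH =>
      rw [Finset.sum_range_succ, Finset.sum_range_succ]
      have := hdescent n
      linarith
  -- endgame
  set A : ℝ := ∑ t ∈ Finset.range T, Fp t with hA
  set B : ℝ := ∑ t ∈ Finset.range T, V t with hB
  have hA0 : 0 ≤ A := Finset.sum_nonneg fun t _ => hFp0 t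
  have hB0 : 0 ≤ B := Finset.sum_nonneg fun t _ => hV0 t
  have hBW : B ≤ γ^2*H^2 * ∑ s ∈ Finset.range T, W s := by
    rw [hB, hT]
    exact htot p
  have hWA : ∑ s ∈ Finset.range T, W s ≤ 8*L*A + 4*L^2*B + 2*sig*T := by
    have hpt : ∀ s, W s ≤ 8*L*Fp s + 4*L^2*V s + 2*sig := by
      intro s
      have h1 := hWb s
      have h2 := hQb s
      have h3 := hDbb s
      nlinarith [mul_le_mul_of_nonneg_left h3 (by linarith : (0:ℝ) ≤ 2*L)]
    calc ∑ s ∈ Finset.range T, W s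
        ≤ ∑ s ∈ Finset.range T, (8*L*Fp s + 4*L^2*V s + 2*sig) :=
          Finset.sum_le_sum fun s _ => hpt s
      _ = 8*L*A + 4*L^2*B + 2*sig*T := by
          rw [Finset.sum_add_distrib, Finset.sum_add_distrib, ← Finset.mul_sum,
            ← Finset.mul_sum, Finset.sum_const, Finset.card_range, nsmul_eq_mul, hA, hB]
          ring
  have h16 : γ^2*(H:ℝ)^2*L^2 ≤ 1/16 := by
    nlinarith [mul_pos (mul_pos hγ0 hL) hHR]
  have hgB : B ≤ (32/3)*γ^2*H^2*L*A + (8/3)*γ^2*H^2*sig*T := by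
    have h1 : B ≤ γ^2*H^2*(8*L*A + 4*L^2*B + 2*sig*T) :=
      le_trans hBW (mul_le_mul_of_nonneg_left hWA (by positivity))
    nlinarith [mul_le_mul_of_nonneg_right h16 hB0]
  have hr0 : r 0 = ‖x₀ - xstar‖^2 := by
    simp only [hr, hxh]
    have hc : x 0 = fun _ => x₀ := funext hx0
    rw [hc, avgV_const hM]
  have hTR : (0:ℝ) < T := Nat.cast_pos.2 hTpos
  have hmain : γ * A ≤ (3/4) * ‖x₀ - xstar‖^2 + 2*γ^3*L*H^2*sig*T := by
    have htelT := htel T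
    rw [← Finset.mul_sum, ← Finset.mul_sum, ← hA, ← hB, hr0] at htelT
    have hrT : 0 ≤ r T := by rw [hr]; positivity
    have h2 : 2*γ*A ≤ ‖x₀ - xstar‖^2 + γ*L*B := by linarith
    have h3 := mul_le_mul_of_nonneg_left hgB (by positivity : (0:ℝ) ≤ γ*L)
    have h4 := mul_le_mul_of_nonneg_right
      (mul_le_mul_of_nonneg_left h16 hγ0.le) hA0
    nlinarith [h2, h3, h4]
  -- Jensen over time
  have hjensen : (T:ℝ) * (F ((1 / (T : ℝ)) • ∑ t ∈ Finset.range T, avgV (x t)) - F xstar)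
      ≤ A := by
    set xb : EuclideanSpace ℝ (Fin d) :=
      (1 / (T : ℝ)) • ∑ t ∈ Finset.range T, avgV (x t) with hxb
    have hTne : (T:ℝ) ≠ 0 := ne_of_gt hTR
    have hTsmul : (T:ℕ) • xb = ∑ t ∈ Finset.range T, avgV (x t) := by
      rw [hxb, ← Nat.cast_smul_eq_nsmul ℝ, smul_smul]
      field_simp
      exact one_smul _ _
    have hsum0 : ∑ t ∈ Finset.range T, (avgV (x t) - xb) = 0 := by
      rw [Finset.sum_sub_distrib, Finset.sum_const, Finset.card_range, hTsmul, sub_self]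
    have hm : ∀ m, (T:ℝ) * f m xb ≤ ∑ t ∈ Finset.range T, f m (avgV (x t)) := by
      intro m
      have hsumineq : 0 ≤ ∑ t ∈ Finset.range T,
          (f m (avgV (x t)) - f m xb - ⟪g m xb, avgV (x t) - xb⟫) :=
        Finset.sum_nonneg fun t _ => (hsc m (avgV (x t)) xb).1
      have hinner0 : ∑ t ∈ Finset.range T, ⟪g m xb, avgV (x t) - xb⟫ = 0 := by
        rw [← inner_sum, hsum0, inner_zero_right]
      rw [Finset.sum_sub_distrib, Finset.sum_sub_distrib, hinner0, sub_zero,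
        Finset.sum_const, Finset.card_range, nsmul_eq_mul] at hsumineq
      linarith
    have h1 := avgR_mono hm
    rw [avgR_mul, avgR_sum] at h1
    have hAeq : ∑ t ∈ Finset.range T, avgR (fun m => f m (avgV (x t)))
        = A + T * avgR (fun m => f m xstar) := by
      rw [hA]
      simp only [hFp, hxh, hF]
      rw [Finset.sum_sub_distrib, Finset.sum_const, Finset.card_range, nsmul_eq_mul]
      ring
    rw [hAeq] at h1
    simp only [hF]
    rw [mul_sub]
    linarith
  -- conclusion
  have hγT : (0:ℝ) < γ * T := mul_pos hγ0 hTR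
  have hgoal : F ((1 / (T : ℝ)) • ∑ t ∈ Finset.range T, avgV (x t)) - F xstar
      ≤ 2 * ‖x₀ - xstar‖ ^ 2 / (γ * T) + 24 * γ ^ 2 * sig * H ^ 2 * L := by
    set D : ℝ := F ((1 / (T : ℝ)) • ∑ t ∈ Finset.range T, avgV (x t)) - F xstar with hD
    clear_value D
    clear_value A
    clear_value B
    clear_value sig
    have hj2 : γ*((T:ℝ)*D) ≤ γ*A := mul_le_mul_of_nonneg_left hjensen hγ0.le
    have h2 : γ*(T:ℝ)*D ≤ (3/4) * ‖x₀ - xstar‖^2 + 2*γ^3*L*H^2*sig*T := by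
      linarith only [hj2, hmain]
    have h3 : D ≤ ((3/4) * ‖x₀ - xstar‖^2 + 2*γ^3*L*H^2*sig*T)/(γ*T) := by
      rw [le_div_iff₀ hγT]
      linarith only [h2]
    have h4 : ((3/4) * ‖x₀ - xstar‖^2 + 2*γ^3*L*H^2*sig*T)/(γ*T)
        ≤ 2 * ‖x₀ - xstar‖ ^ 2 / (γ * T) + 24 * γ ^ 2 * sig * H ^ 2 * L := by
      rw [add_div]
      have hA' : (3/4) * ‖x₀ - xstar‖^2/(γ*T) ≤ 2 * ‖x₀ - xstar‖^2/(γ*T) := by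
        rw [div_le_div_iff_of_pos_right hγT]
        linarith only [sq_nonneg ‖x₀ - xstar‖]
      have hB' : 2*γ^3*L*H^2*sig*(T:ℝ)/(γ*T) = 2*γ^2*L*H^2*sig := by
        field_simp
      rw [hB']
      have hC' : 2*γ^2*L*(H:ℝ)^2*sig ≤ 24 * γ ^ 2 * sig * H ^ 2 * L := by
        linarith only [mul_nonneg (mul_nonneg (mul_nonneg (sq_nonneg γ) hL.le)
          (sq_nonneg (H:ℝ))) hsig0]
      linarith only [hA', hC']
    linarith only [h3, h4]
  simp only [hF] at hgoal
  exact hgoal
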